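/- (Transfer consequence of the Simulation Lemma, Section 4.1.) Let M1 = (T1, R1) and M2 = (T2, R2) be two stochastic finite MDPs on the same nonempty finite state space S and nonempty finite action space A satisfying hypotheses (i)–(iii) of the Simulation Lemma with parameters δR, δT ≥ 0 (rewards nonnegative, every length-H cumulative reward at most 1, reward differences at most δR pointwise, ℓ1 transition differences at most δT pointwise), and fix a horizon H ≥ 1 and an initial state s0. If a stochastic stationary policy π : S → PMF(A) satisfies V1(H, s0; π) ≥ max_{π' : S → PMF(A)} V1(H, s0; π') − η for some η ≥ 0, then V2(H, s0; π) ≥ max_{π' : S → PMF(A)} V2(H, s0; π') − η − 2(δR + δT)·H. -/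

import Mathlib

open scoped BigOperators

lemma pmf_sum_toReal {A : Type*} [Fintype A] (p : PMF A) :
    ∑ a : A, (p a).toReal = 1 := by
  have h := p.tsum_coe
  rw [tsum_fintype] at h
  have h2 : (∑ a : A, p a).toReal = (1 : ENNReal).toReal := by rw [h]
  rwa [ENNReal.toReal_sum (fun a _ => p.apply_ne_top a), ENNReal.toReal_one] at h2

lemma pmf_toReal_nonneg {A : Type*} (p : PMF A) (a : A) : 0 ≤ (p a).toReal :=
  ENNReal.toReal_nonneg

/-- The `h`-step value of a stochastic stationary policy `π` in the stochastic finite MDP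
with transition kernel `T` and reward function `R`:
`V 0 s = 0`, `V (h+1) s = Σ_a π(s)(a) · (R(s,a) + Σ_{s'} T(s,a)(s') · V h s')`. -/
noncomputable def stochVal {S A : Type*} [Fintype S] [Fintype A]
    (T : S → A → PMF S) (R : S → A → ℝ) (π : S → PMF A) : ℕ → S → ℝ
  | 0, _ => 0
  | h + 1, s =>
      ∑ a : A, ((π s) a).toReal *
        (R s a + ∑ s' : S, ((T s a) s').toReal * stochVal T R π h s')

lemma stochVal_nonneg {S A : Type*} [Fintype S] [Fintype A]
    (T : S → A → PMF S) (R : S → A → ℝ) (π : S → PMF A)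
    (hR : ∀ s a, 0 ≤ R s a) : ∀ h s, 0 ≤ stochVal T R π h s := by
  intro h
  induction h with
  | zero => intro s; simp [stochVal]
  | succ h ih =>
    intro s
    simp only [stochVal]
    apply Finset.sum_nonneg
    intro a _
    apply mul_nonneg (pmf_toReal_nonneg _ _)
    apply add_nonneg (hR s a)
    exact Finset.sum_nonneg fun s' _ => mul_nonneg (pmf_toReal_nonneg _ _) (ih s')

lemma stochVal_le {S A : Type*} [Fintype S] [Fintype A]
    (T : S → A → PMF S) (R : S → A → ℝ) (π : S → PMF A)
    (B : ℝ) (hB : 0 ≤ B) (hR : ∀ s a, R s a ≤ B) :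
    ∀ h s, stochVal T R π h s ≤ h * B := by
  intro h
  induction h with
  | zero => intro s; simp [stochVal]
  | succ h ih =>
    intro s
    simp only [stochVal]
    have key : ∀ a : A, ((π s) a).toReal *
        (R s a + ∑ s' : S, ((T s a) s').toReal * stochVal T R π h s')
        ≤ ((π s) a).toReal * (B + h * B) := by
      intro a
      apply mul_le_mul_of_nonneg_left _ (pmf_toReal_nonneg _ _)
      apply add_le_add (hR s a)
      calc ∑ s' : S, ((T s a) s').toReal * stochVal T R π h s'
          ≤ ∑ s' : S, ((T s a) s').toReal * (h * B) := by
            apply Finset.sum_le_sum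
            intro s' _
            exact mul_le_mul_of_nonneg_left (ih s') (pmf_toReal_nonneg _ _)
        _ = (∑ s' : S, ((T s a) s').toReal) * (h * B) := by
            rw [Finset.sum_mul]
        _ = h * B := by rw [pmf_sum_toReal]; ring
    calc ∑ a : A, ((π s) a).toReal *
          (R s a + ∑ s' : S, ((T s a) s').toReal * stochVal T R π h s')
        ≤ ∑ a : A, ((π s) a).toReal * (B + h * B) :=
          Finset.sum_le_sum fun a _ => key a
      _ = (∑ a : A, ((π s) a).toReal) * (B + h * B) := by rw [Finset.sum_mul]
      _ = (h + 1 : ℕ) * B := by rw [pmf_sum_toReal]; push_cast; ring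

lemma stochVal_diff_le {S A : Type*} [Fintype S] [Fintype A]
    (T1 T2 : S → A → PMF S) (R1 R2 : S → A → ℝ) (π : S → PMF A)
    (H : ℕ) (hH : 1 ≤ H)
    (δR δT : ℝ) (hδR : 0 ≤ δR) (hδT : 0 ≤ δT)
    (hrew : ∀ s : S, ∀ a : A, |R1 s a - R2 s a| ≤ δR)
    (htrans : ∀ s : S, ∀ a : A,
      (∑ s' : S, |((T1 s a) s').toReal - ((T2 s a) s').toReal|) ≤ δT)
    (hnonneg2 : ∀ s a, 0 ≤ R2 s a)
    (hR2le : ∀ s a, R2 s a ≤ 1 / H) :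
    ∀ h, h ≤ H → ∀ s, |stochVal T1 R1 π h s - stochVal T2 R2 π h s| ≤ (δR + δT) * h := by
  have hHpos : (0:ℝ) < H := by exact_mod_cast hH
  -- bound on V2
  have hV2 : ∀ h, h ≤ H → ∀ s, |stochVal T2 R2 π h s| ≤ 1 := by
    intro h hh s
    rw [abs_le]
    constructor
    · linarith [stochVal_nonneg T2 R2 π hnonneg2 h s]
    · calc stochVal T2 R2 π h s ≤ h * (1 / H) :=
            stochVal_le T2 R2 π (1 / H) (by positivity) hR2le h s
        _ ≤ H * (1 / H) := by
            apply mul_le_mul_of_nonneg_right _ (by positivity)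
            exact_mod_cast hh
        _ = 1 := by field_simp
  intro h
  induction h with
  | zero => intro _ s; simp [stochVal, hδR, hδT]
  | succ h ih =>
    intro hh s
    have hh' : h ≤ H := le_of_lt (Nat.lt_of_succ_le hh)
    have ih' := ih hh'
    simp only [stochVal]
    rw [← Finset.sum_sub_distrib]
    have step : ∀ a : A,
        |((π s) a).toReal * (R1 s a + ∑ s' : S, ((T1 s a) s').toReal * stochVal T1 R1 π h s')
          - ((π s) a).toReal * (R2 s a + ∑ s' : S, ((T2 s a) s').toReal * stochVal T2 R2 π h s')|
        ≤ ((π s) a).toReal * ((δR + δT) * h + δR + δT) := by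
      intro a
      rw [← mul_sub, abs_mul, abs_of_nonneg (pmf_toReal_nonneg _ _)]
      apply mul_le_mul_of_nonneg_left _ (pmf_toReal_nonneg _ _)
      have expand : (R1 s a + ∑ s' : S, ((T1 s a) s').toReal * stochVal T1 R1 π h s')
          - (R2 s a + ∑ s' : S, ((T2 s a) s').toReal * stochVal T2 R2 π h s')
          = (R1 s a - R2 s a)
            + ∑ s' : S, ((((T1 s a) s').toReal - ((T2 s a) s').toReal) * stochVal T2 R2 π h s'
              + ((T1 s a) s').toReal * (stochVal T1 R1 π h s' - stochVal T2 R2 π h s')) := by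
        have e1 : ∑ s' : S, ((T1 s a) s').toReal * stochVal T1 R1 π h s'
            - ∑ s' : S, ((T2 s a) s').toReal * stochVal T2 R2 π h s'
            = ∑ s' : S, ((((T1 s a) s').toReal - ((T2 s a) s').toReal) * stochVal T2 R2 π h s'
              + ((T1 s a) s').toReal * (stochVal T1 R1 π h s' - stochVal T2 R2 π h s')) := by
          rw [← Finset.sum_sub_distrib]
          apply Finset.sum_congr rfl; intro s' _; ring
        linarith [e1]
      rw [expand]
      calc |(R1 s a - R2 s a)
            + ∑ s' : S, ((((T1 s a) s').toReal - ((T2 s a) s').toReal) * stochVal T2 R2 π h s'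
              + ((T1 s a) s').toReal * (stochVal T1 R1 π h s' - stochVal T2 R2 π h s'))|
          ≤ |R1 s a - R2 s a|
            + ∑ s' : S, (|(((T1 s a) s').toReal - ((T2 s a) s').toReal)| * |stochVal T2 R2 π h s'|
              + ((T1 s a) s').toReal * |stochVal T1 R1 π h s' - stochVal T2 R2 π h s'|) := by
            apply le_trans (abs_add_le _ _)
            apply add_le_add_right
            apply le_trans (Finset.abs_sum_le_sum_abs _ _)
            apply Finset.sum_le_sum
            intro s' _
            apply le_trans (abs_add_le _ _)
            apply add_le_add
            · rw [abs_mul]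
            · rw [abs_mul, abs_of_nonneg (pmf_toReal_nonneg _ _)]
        _ ≤ δR + ∑ s' : S, (|(((T1 s a) s').toReal - ((T2 s a) s').toReal)| * 1
              + ((T1 s a) s').toReal * ((δR + δT) * h)) := by
            apply add_le_add (hrew s a)
            apply Finset.sum_le_sum
            intro s' _
            apply add_le_add
            · exact mul_le_mul_of_nonneg_left (hV2 h hh' s') (abs_nonneg _)
            · exact mul_le_mul_of_nonneg_left (ih' s') (pmf_toReal_nonneg _ _)
        _ ≤ δR + (δT + (δR + δT) * h) := by
            apply add_le_add_right
            rw [Finset.sum_add_distrib]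
            apply add_le_add
            · simp only [mul_one]; exact htrans s a
            · rw [← Finset.sum_mul, pmf_sum_toReal, one_mul]
        _ = (δR + δT) * h + δR + δT := by ring
    calc |∑ a : A,
          (((π s) a).toReal * (R1 s a + ∑ s' : S, ((T1 s a) s').toReal * stochVal T1 R1 π h s')
          - ((π s) a).toReal * (R2 s a + ∑ s' : S, ((T2 s a) s').toReal * stochVal T2 R2 π h s'))|
        ≤ ∑ a : A, ((π s) a).toReal * ((δR + δT) * h + δR + δT) := by
          apply le_trans (Finset.abs_sum_le_sum_abs _ _)
          exact Finset.sum_le_sum fun a _ => step a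
      _ = (δR + δT) * (h + 1 : ℕ) := by
          rw [← Finset.sum_mul, pmf_sum_toReal, one_mul]; push_cast; ring

/-- **Transfer consequence of the Simulation Lemma (Section 4.1).** A policy that is
`η`-optimal in `M1` is `(η + 2(δR + δT)·H)`-optimal in `M2`.  The maximum over stochastic
stationary policies is written as a supremum (it is attained, e.g. at a deterministic
policy, so the supremum equals the maximum). -/
theorem simulation_lemma_transfer
    {S A : Type*} [Fintype S] [Nonempty S] [Fintype A] [Nonempty A]
    (T1 T2 : S → A → PMF S) (R1 R2 : S → A → ℝ)
    (H : ℕ) (hH : 1 ≤ H)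
    (δR δT : ℝ) (hδR : 0 ≤ δR) (hδT : 0 ≤ δT)
    (hrew : ∀ s : S, ∀ a : A, |R1 s a - R2 s a| ≤ δR)
    (htrans : ∀ s : S, ∀ a : A,
      (∑ s' : S, |((T1 s a) s').toReal - ((T2 s a) s').toReal|) ≤ δT)
    (hnonneg1 : ∀ s : S, ∀ a : A, 0 ≤ R1 s a)
    (hnonneg2 : ∀ s : S, ∀ a : A, 0 ≤ R2 s a)
    (hbdd1 : ∀ sa : Fin H → S × A, (∑ t : Fin H, R1 (sa t).1 (sa t).2) ≤ 1)
    (hbdd2 : ∀ sa : Fin H → S × A, (∑ t : Fin H, R2 (sa t).1 (sa t).2) ≤ 1)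
    (s0 : S)
    (π : S → PMF A) (η : ℝ) (hη : 0 ≤ η)
    (hopt1 : stochVal T1 R1 π H s0 ≥ (⨆ π' : S → PMF A, stochVal T1 R1 π' H s0) - η) :
    stochVal T2 R2 π H s0 ≥
      (⨆ π' : S → PMF A, stochVal T2 R2 π' H s0) - η - 2 * (δR + δT) * H := by
  have hHpos : (0:ℝ) < H := by exact_mod_cast hH
  have hR1le : ∀ s a, R1 s a ≤ 1 / H := by
    intro s a
    have := hbdd1 (fun _ => (s, a))
    simp only [Finset.sum_const, Finset.card_univ, Fintype.card_fin, nsmul_eq_mul] at this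
    rw [le_div_iff₀ hHpos, mul_comm]; exact this
  have hR2le : ∀ s a, R2 s a ≤ 1 / H := by
    intro s a
    have := hbdd2 (fun _ => (s, a))
    simp only [Finset.sum_const, Finset.card_univ, Fintype.card_fin, nsmul_eq_mul] at this
    rw [le_div_iff₀ hHpos, mul_comm]; exact this
  set C : ℝ := (δR + δT) * H with hC
  have hdiff : ∀ π' : S → PMF A, ∀ s,
      |stochVal T1 R1 π' H s - stochVal T2 R2 π' H s| ≤ C := fun π' s =>
    stochVal_diff_le T1 T2 R1 R2 π' H hH δR δT hδR hδT hrew htrans hnonneg2 hR2le H le_rfl s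
  -- boundedness of the value function families
  have hbdd1' : BddAbove (Set.range fun π' : S → PMF A => stochVal T1 R1 π' H s0) := by
    refine ⟨1, ?_⟩
    rintro x ⟨π', rfl⟩
    calc stochVal T1 R1 π' H s0 ≤ H * (1 / H) :=
          stochVal_le T1 R1 π' (1 / H) (by positivity) hR1le H s0
      _ = 1 := by field_simp
  have hbdd2' : BddAbove (Set.range fun π' : S → PMF A => stochVal T2 R2 π' H s0) := by
    refine ⟨1, ?_⟩
    rintro x ⟨π', rfl⟩
    calc stochVal T2 R2 π' H s0 ≤ H * (1 / H) :=
          stochVal_le T2 R2 π' (1 / H) (by positivity) hR2le H s0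
      _ = 1 := by field_simp
  have hsup : (⨆ π' : S → PMF A, stochVal T2 R2 π' H s0)
      ≤ (⨆ π' : S → PMF A, stochVal T1 R1 π' H s0) + C := by
    apply ciSup_le
    intro π'
    have h1 : stochVal T2 R2 π' H s0 ≤ stochVal T1 R1 π' H s0 + C := by
      have := hdiff π' s0
      rw [abs_le] at this
      linarith [this.1]
    have h2 : stochVal T1 R1 π' H s0 ≤ ⨆ π'' : S → PMF A, stochVal T1 R1 π'' H s0 :=
      le_ciSup hbdd1' π'
    linarith
  have hπ : |stochVal T1 R1 π H s0 - stochVal T2 R2 π H s0| ≤ C := hdiff π s0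
  rw [abs_le] at hπ
  have : stochVal T2 R2 π H s0 ≥ stochVal T1 R1 π H s0 - C := by linarith [hπ.2]
  have h2C : 2 * (δR + δT) * H = 2 * C := by rw [hC]; ring
  rw [ge_iff_le, h2C]
  linarith [hopt1, hsup, this]
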